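/- Let b > 0 and let k ≥ 1 be a natural number. Let μ be the product measure on ℝ^k each of whose k factors is the Laplace measure with scale b. Let v be a real number with v ≥ √k · b, and let λ be a real number with 0 < λ < 2√2 · v²/b. Then μ({x ∈ ℝ^k : ∑_{i=1}^{k} x_i > λ}) ≤ exp(−λ²/(8v²)). -/

import Mathlib

set_option maxHeartbeats 1000000

open MeasureTheory Real
open scoped ENNReal

/-- The Laplace measure with scale `b`. -/
noncomputable def laplaceMeasure (b : ℝ) : Measure ℝ :=
  volume.withDensity (fun x => ENNReal.ofReal ((1 / (2 * b)) * Real.exp (-|x| / b)))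

namespace LaplaceAux

open Set

lemma intOn_Ioi {a : ℝ} (ha : 0 < a) :
    IntegrableOn (fun x : ℝ => rexp (-(a * x))) (Ioi 0) := by
  simpa [neg_mul] using exp_neg_integrableOn_Ioi 0 ha

lemma int_Ioi {a : ℝ} (ha : 0 < a) :
    ∫ x in Ioi (0:ℝ), rexp (-(a * x)) = 1 / a := by
  have h := integral_comp_mul_left_Ioi (fun x => rexp (-x)) 0 ha
  simp only [mul_zero, integral_exp_neg_Ioi_zero, smul_eq_mul, mul_one] at h
  rw [h, one_div]

lemma intOn_Iic {a : ℝ} (ha : 0 < a) :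
    IntegrableOn (fun x : ℝ => rexp (a * x)) (Iic 0) := by
  rw [← Measure.map_neg_eq_self (volume : Measure ℝ)]
  have m : MeasurableEmbedding fun x : ℝ => -x := (Homeomorph.neg ℝ).measurableEmbedding
  rw [m.integrableOn_map_iff]
  simp_rw [Function.comp_def, mul_neg, neg_preimage, neg_Iic, neg_zero]
  exact Iff.mpr integrableOn_Ici_iff_integrableOn_Ioi (intOn_Ioi ha)

lemma int_Iic {a : ℝ} (ha : 0 < a) :
    ∫ x in Iic (0:ℝ), rexp (a * x) = 1 / a := by
  rw [← neg_zero, ← integral_comp_neg_Ioi]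
  simp_rw [mul_neg]
  exact int_Ioi ha

lemma key_integrable {b t : ℝ} (hb : 0 < b) (ht0 : 0 ≤ t) (ht : t < 1 / b) :
    Integrable (fun x : ℝ => (1 / (2 * b)) * rexp (t * x - |x| / b)) volume := by
  have ha1 : 0 < t + 1 / b := by positivity
  have ha2 : 0 < 1 / b - t := by linarith
  have h1 : IntegrableOn (fun x : ℝ => (1 / (2 * b)) * rexp (t * x - |x| / b)) (Iic 0) := by
    refine IntegrableOn.congr_fun ((intOn_Iic ha1).const_mul (1 / (2 * b)))
      (fun x hx => ?_) measurableSet_Iic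
    rw [abs_of_nonpos (Set.mem_Iic.mp hx)]
    ring_nf
  have h2 : IntegrableOn (fun x : ℝ => (1 / (2 * b)) * rexp (t * x - |x| / b)) (Ioi 0) := by
    refine IntegrableOn.congr_fun ((intOn_Ioi ha2).const_mul (1 / (2 * b)))
      (fun x hx => ?_) measurableSet_Ioi
    rw [abs_of_pos (Set.mem_Ioi.mp hx)]
    ring_nf
  have := h1.union h2
  rwa [Iic_union_Ioi, integrableOn_univ] at this

lemma key_integral {b t : ℝ} (hb : 0 < b) (ht0 : 0 ≤ t) (ht : t < 1 / b) :
    ∫ x : ℝ, (1 / (2 * b)) * rexp (t * x - |x| / b) = 1 / (1 - b ^ 2 * t ^ 2) := by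
  have ha1 : 0 < t + 1 / b := by positivity
  have ha2 : 0 < 1 / b - t := by linarith
  have hI := key_integrable hb ht0 ht
  rw [← intervalIntegral.integral_Iic_add_Ioi (b := (0:ℝ)) hI.integrableOn hI.integrableOn]
  have e1 : ∫ x in Iic (0:ℝ), (1 / (2 * b)) * rexp (t * x - |x| / b)
      = (1 / (2 * b)) * (1 / (t + 1 / b)) := by
    rw [show ∫ x in Iic (0:ℝ), (1 / (2 * b)) * rexp (t * x - |x| / b)
        = ∫ x in Iic (0:ℝ), (1 / (2 * b)) * rexp ((t + 1 / b) * x) from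
      setIntegral_congr_fun measurableSet_Iic (fun x hx => by
        rw [abs_of_nonpos (Set.mem_Iic.mp hx)]; ring_nf)]
    rw [integral_const_mul, int_Iic ha1]
  have e2 : ∫ x in Ioi (0:ℝ), (1 / (2 * b)) * rexp (t * x - |x| / b)
      = (1 / (2 * b)) * (1 / (1 / b - t)) := by
    rw [show ∫ x in Ioi (0:ℝ), (1 / (2 * b)) * rexp (t * x - |x| / b)
        = ∫ x in Ioi (0:ℝ), (1 / (2 * b)) * rexp (-((1 / b - t) * x)) from
      setIntegral_congr_fun measurableSet_Ioi (fun x hx => by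
        rw [abs_of_pos (Set.mem_Ioi.mp hx)]; ring_nf)]
    rw [integral_const_mul, int_Ioi ha2]
  rw [e1, e2]
  have hbne : b ≠ 0 := hb.ne'
  have hbt : b * t < 1 := by
    have := (lt_div_iff₀ hb).mp ht
    linarith [mul_comm t b]
  have hne : 1 - b ^ 2 * t ^ 2 ≠ 0 := by nlinarith [mul_nonneg hb.le ht0]
  have h3 : (0:ℝ) < b * 2 - b ^ 2 * t * 2 := by nlinarith
  have hp : 0 < 1 + b * t := by nlinarith [mul_nonneg hb.le ht0]
  have hm : 0 < 1 - b * t := by linarith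
  rw [show t + 1 / b = (1 + b * t) / b by field_simp; ring, show 1 / b - t = (1 - b * t) / b by field_simp,
    show 1 - b ^ 2 * t ^ 2 = (1 + b * t) * (1 - b * t) by ring]
  field_simp
  ring

end LaplaceAux

open LaplaceAux

lemma laplace_isProbability {b : ℝ} (hb : 0 < b) :
    IsProbabilityMeasure (laplaceMeasure b) := by
  constructor
  rw [laplaceMeasure, withDensity_apply _ MeasurableSet.univ, Measure.restrict_univ]
  have h0 : (0:ℝ) < 1 / b := by positivity
  have hint := key_integrable hb le_rfl h0
  have hval := key_integral hb le_rfl h0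
  have hcong : (fun x : ℝ => (1 / (2 * b)) * rexp (0 * x - |x| / b))
      = fun x : ℝ => (1 / (2 * b)) * rexp (-|x| / b) := by
    funext x; ring_nf
  rw [hcong] at hint hval
  rw [← ofReal_integral_eq_lintegral_ofReal hint
    (Filter.Eventually.of_forall fun x => by positivity)]
  rw [hval]
  norm_num

lemma laplace_mgf_integrable {b t : ℝ} (hb : 0 < b) (ht0 : 0 ≤ t) (ht : t < 1 / b) :
    Integrable (fun x : ℝ => rexp (t * x)) (laplaceMeasure b) := by
  have hd : Measurable fun x : ℝ => ((1 / (2 * b)) * rexp (-|x| / b)).toNNReal :=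
    (by fun_prop : Measurable fun x : ℝ => (1 / (2 * b)) * rexp (-|x| / b)).real_toNNReal
  rw [laplaceMeasure,
    show (fun x : ℝ => ENNReal.ofReal ((1 / (2 * b)) * rexp (-|x| / b)))
      = fun x : ℝ => (((1 / (2 * b)) * rexp (-|x| / b)).toNNReal : ℝ≥0∞) from rfl,
    integrable_withDensity_iff_integrable_smul hd]
  refine (key_integrable hb ht0 ht).congr (Filter.Eventually.of_forall fun x => ?_)
  have hnn : (0:ℝ) ≤ (1 / (2 * b)) * rexp (-|x| / b) := by positivity
  simp only [NNReal.smul_def, smul_eq_mul]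
  rw [Real.coe_toNNReal _ hnn]
  rw [show t * x - |x| / b = t * x + (-|x| / b) by ring, Real.exp_add]
  ring

lemma laplace_mgf {b t : ℝ} (hb : 0 < b) (ht0 : 0 ≤ t) (ht : t < 1 / b) :
    ∫ x : ℝ, rexp (t * x) ∂(laplaceMeasure b) = 1 / (1 - b ^ 2 * t ^ 2) := by
  have hd : Measurable fun x : ℝ => ((1 / (2 * b)) * rexp (-|x| / b)).toNNReal :=
    (by fun_prop : Measurable fun x : ℝ => (1 / (2 * b)) * rexp (-|x| / b)).real_toNNReal
  rw [laplaceMeasure,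
    show (fun x : ℝ => ENNReal.ofReal ((1 / (2 * b)) * rexp (-|x| / b)))
      = fun x : ℝ => (((1 / (2 * b)) * rexp (-|x| / b)).toNNReal : ℝ≥0∞) from rfl,
    integral_withDensity_eq_integral_smul hd]
  rw [← key_integral hb ht0 ht]
  refine integral_congr_ae (Filter.Eventually.of_forall fun x => ?_)
  have hnn : (0:ℝ) ≤ (1 / (2 * b)) * rexp (-|x| / b) := by positivity
  simp only [NNReal.smul_def, smul_eq_mul]
  rw [Real.coe_toNNReal _ hnn]
  rw [show t * x - |x| / b = t * x + (-|x| / b) by ring, Real.exp_add]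
  ring

lemma laplace_pi_mgf {b t : ℝ} (hb : 0 < b) (ht0 : 0 ≤ t) (ht : t < 1 / b) (k : ℕ) :
    Integrable (fun x : Fin k → ℝ => rexp (t * ∑ i, x i))
      (Measure.pi fun _ : Fin k => laplaceMeasure b) ∧
    ∫ x : Fin k → ℝ, rexp (t * ∑ i, x i) ∂(Measure.pi fun _ : Fin k => laplaceMeasure b)
      = (1 / (1 - b ^ 2 * t ^ 2)) ^ k := by
  letI : MeasureSpace ℝ := ⟨laplaceMeasure b⟩
  haveI : IsProbabilityMeasure (volume : Measure ℝ) := laplace_isProbability hb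
  have hμ : (Measure.pi fun _ : Fin k => laplaceMeasure b) = (volume : Measure (Fin k → ℝ)) :=
    (MeasureTheory.volume_pi).symm
  have hfun : (fun x : Fin k → ℝ => rexp (t * ∑ i, x i))
      = fun x : Fin k → ℝ => ∏ i, rexp (t * x i) := by
    funext x; rw [Finset.mul_sum, Real.exp_sum]
  constructor
  · rw [hμ, hfun]
    exact Integrable.fintype_prod (f := fun (_ : Fin k) (x : ℝ) => rexp (t * x))
      fun _ => laplace_mgf_integrable hb ht0 ht
  · rw [hμ, hfun, MeasureTheory.volume_pi, MeasureTheory.integral_fintype_prod_eq_pow (ι := Fin k) (fun x : ℝ => rexp (t * x)),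
      show (volume : Measure ℝ) = laplaceMeasure b from rfl, laplace_mgf hb ht0 ht]
    simp

theorem laplace_sum_tail_bound (b : ℝ) (hb : 0 < b) (k : ℕ) (hk : 1 ≤ k)
    (v : ℝ) (hv : Real.sqrt k * b ≤ v) (lam : ℝ) (hlam₁ : 0 < lam)
    (hlam₂ : lam < 2 * Real.sqrt 2 * v ^ 2 / b) :
    Measure.pi (fun _ : Fin k => laplaceMeasure b) {x : Fin k → ℝ | lam < ∑ i, x i} ≤
      ENNReal.ofReal (Real.exp (-lam ^ 2 / (8 * v ^ 2))) := by
  have hk1 : (1:ℝ) ≤ Real.sqrt k := by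
    rw [show (1:ℝ) = Real.sqrt 1 from (Real.sqrt_one).symm]
    exact Real.sqrt_le_sqrt (by exact_mod_cast hk)
  have hv0 : 0 < v := lt_of_lt_of_le (by nlinarith) hv
  set t : ℝ := lam / (4 * v ^ 2) with ht_def
  have ht0 : 0 < t := by positivity
  have hsqrt2 : Real.sqrt 2 < 2 := by
    nlinarith [Real.sq_sqrt (by norm_num : (0:ℝ) ≤ 2), Real.sqrt_nonneg 2]
  have hsqrt2' : (0:ℝ) ≤ Real.sqrt 2 := Real.sqrt_nonneg 2
  have htb2 : t < Real.sqrt 2 / (2 * b) := by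
    rw [ht_def, div_lt_div_iff₀ (by positivity) (by positivity)]
    calc lam * (2 * b) < (2 * Real.sqrt 2 * v ^ 2 / b) * (2 * b) := by
          apply mul_lt_mul_of_pos_right hlam₂ (by positivity)
      _ = Real.sqrt 2 * (4 * v ^ 2) := by field_simp; ring
  have htb : t < 1 / b := by
    have h : Real.sqrt 2 / (2 * b) < 1 / b := by
      rw [div_lt_div_iff₀ (by positivity) hb]
      nlinarith
    linarith
  have hbt2 : b ^ 2 * t ^ 2 < 1 / 2 := by
    have h1 : b * t < Real.sqrt 2 / 2 := by
      calc b * t < b * (Real.sqrt 2 / (2 * b)) := mul_lt_mul_of_pos_left htb2 hb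
        _ = Real.sqrt 2 / 2 := by field_simp
    have h2 : (0:ℝ) ≤ b * t := by positivity
    nlinarith [Real.sq_sqrt (by norm_num : (0:ℝ) ≤ 2)]
  set μ := Measure.pi fun _ : Fin k => laplaceMeasure b with hμ_def
  haveI : IsProbabilityMeasure (laplaceMeasure b) := laplace_isProbability hb
  haveI : IsProbabilityMeasure μ := MeasureTheory.Measure.pi.instIsProbabilityMeasure _
  obtain ⟨hint, hval⟩ := laplace_pi_mgf hb ht0.le htb k
  set X : (Fin k → ℝ) → ℝ := fun x => ∑ i, x i with hX_def
  have chern := ProbabilityTheory.measure_ge_le_exp_mul_mgf (X := X) (μ := μ) (t := t)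
    lam ht0.le hint
  have hmgf : ProbabilityTheory.mgf X μ t = (1 / (1 - b ^ 2 * t ^ 2)) ^ k := by
    rw [ProbabilityTheory.mgf]; exact hval
  have hden : (0:ℝ) < 1 - b ^ 2 * t ^ 2 := by nlinarith
  have hstep1 : 1 / (1 - b ^ 2 * t ^ 2) ≤ rexp (2 * (b ^ 2 * t ^ 2)) := by
    have h1 : 1 / (1 - b ^ 2 * t ^ 2) ≤ 1 + 2 * (b ^ 2 * t ^ 2) := by
      rw [div_le_iff₀ hden]
      nlinarith [sq_nonneg (b * t)]
    have h2 : 1 + 2 * (b ^ 2 * t ^ 2) ≤ rexp (2 * (b ^ 2 * t ^ 2)) := by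
      have := Real.add_one_le_exp (2 * (b ^ 2 * t ^ 2))
      linarith
    linarith
  have hpow : (1 / (1 - b ^ 2 * t ^ 2)) ^ k ≤ rexp ((k : ℝ) * (2 * (b ^ 2 * t ^ 2))) := by
    rw [Real.exp_nat_mul]
    exact pow_le_pow_left₀ (by positivity) hstep1 k
  have hkb : (k : ℝ) * b ^ 2 ≤ v ^ 2 := by
    have hs : Real.sqrt (k : ℝ) ^ 2 = (k : ℝ) := Real.sq_sqrt (by positivity)
    nlinarith [Real.sqrt_nonneg (k : ℝ), mul_nonneg (Real.sqrt_nonneg (k:ℝ)) hb.le]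
  have hexp_le : (k : ℝ) * (2 * (b ^ 2 * t ^ 2)) ≤ 2 * v ^ 2 * t ^ 2 := by
    nlinarith [sq_nonneg t]
  have hfinal_exp : -t * lam + 2 * v ^ 2 * t ^ 2 = -lam ^ 2 / (8 * v ^ 2) := by
    rw [ht_def]; field_simp; ring
  have hreal : rexp (-t * lam) * (1 / (1 - b ^ 2 * t ^ 2)) ^ k
      ≤ rexp (-lam ^ 2 / (8 * v ^ 2)) := by
    calc rexp (-t * lam) * (1 / (1 - b ^ 2 * t ^ 2)) ^ k
        ≤ rexp (-t * lam) * rexp ((k : ℝ) * (2 * (b ^ 2 * t ^ 2))) :=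
          mul_le_mul_of_nonneg_left hpow (Real.exp_nonneg _)
      _ = rexp (-t * lam + (k : ℝ) * (2 * (b ^ 2 * t ^ 2))) := (Real.exp_add _ _).symm
      _ ≤ rexp (-t * lam + 2 * v ^ 2 * t ^ 2) := by
          apply Real.exp_le_exp.mpr; linarith
      _ = rexp (-lam ^ 2 / (8 * v ^ 2)) := by rw [hfinal_exp]
  have htoReal : (μ {x | lam ≤ X x}).toReal ≤ rexp (-lam ^ 2 / (8 * v ^ 2)) := by
    calc (μ {x | lam ≤ X x}).toReal ≤ rexp (-t * lam) * ProbabilityTheory.mgf X μ t := chern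
      _ = rexp (-t * lam) * (1 / (1 - b ^ 2 * t ^ 2)) ^ k := by rw [hmgf]
      _ ≤ rexp (-lam ^ 2 / (8 * v ^ 2)) := hreal
  calc μ {x : Fin k → ℝ | lam < ∑ i, x i} ≤ μ {x | lam ≤ X x} :=
        measure_mono (Set.setOf_subset_setOf.mpr fun x hx => le_of_lt hx)
    _ ≤ ENNReal.ofReal (rexp (-lam ^ 2 / (8 * v ^ 2))) := by
        rw [← ENNReal.ofReal_toReal (measure_ne_top μ {x | lam ≤ X x})]
        exact ENNReal.ofReal_le_ofReal htoReal
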